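/- Siegel's lemma: Given a system of m linear equations ∑_{j=1}^n a_{ij}β_j = 0 (1 ≤ i ≤ m) in n > m unknowns, where the a_{ij} are integers not all zero with |a_{ij}| ≤ C, there exists a nontrivial integer solution (β₁,...,β_n) with |β_j| ≤ 1 + (Cn)^{m/(n−m)} for all j. -/

import Mathlib

attribute [local instance] Matrix.seminormedAddCommGroup

/-- Siegel's lemma: a system of `m` homogeneous linear equations in `n > m`
integer unknowns, with integer coefficients not all zero bounded in absolute value by `C`,
has a nontrivial integer solution with `|β_j| ≤ 1 + (Cn)^{m/(n−m)}` for all `j`. -/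
theorem siegel_lemma
    (m n : ℕ) (hmn : m < n) (a : Fin m → Fin n → ℤ) (ha : a ≠ 0)
    (C : ℝ) (hC : 0 < C) (hbound : ∀ i j, (|a i j| : ℝ) ≤ C) :
    ∃ β : Fin n → ℤ, β ≠ 0 ∧
      (∀ i, ∑ j, a i j * β j = 0) ∧
      ∀ j, (|β j| : ℝ) ≤ 1 + (C * n) ^ ((m : ℝ) / ((n : ℝ) - (m : ℝ))) := by
  have hm : 0 < m := by
    rcases Nat.eq_zero_or_pos m with h | h
    · subst h
      exact absurd (Subsingleton.elim a 0) ha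
    · exact h
  have A : Matrix (Fin m) (Fin n) ℤ := Matrix.of a
  obtain ⟨t, ht0, htA, htle⟩ := Int.Matrix.exists_ne_zero_int_vec_norm_le' (Matrix.of a)
    (by simpa using hmn) (by simpa using hm) (by exact ha)
  refine ⟨t, ht0, ?_, ?_⟩
  · intro i
    have := congrFun htA i
    simpa [Matrix.mulVec, dotProduct] using this
  · intro j
    have h1 : (|t j| : ℝ) ≤ ‖t‖ := by
      simpa [Int.norm_eq_abs] using norm_le_pi_norm t j
    have hAC : ‖(Matrix.of a : Matrix (Fin m) (Fin n) ℤ)‖ ≤ C := by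
      rw [Matrix.norm_le_iff hC.le]
      intro i j'
      simpa [Int.norm_eq_abs] using hbound i j'
    have hexp : 0 ≤ (m : ℝ) / ((n : ℝ) - (m : ℝ)) := by
      apply div_nonneg (Nat.cast_nonneg m)
      have : (m : ℝ) < n := by exact_mod_cast hmn
      linarith
    have h2 : ((Fintype.card (Fin n) : ℝ) *
        ‖(Matrix.of a : Matrix (Fin m) (Fin n) ℤ)‖) ^
        ((Fintype.card (Fin m) : ℝ) / ((Fintype.card (Fin n) : ℝ) - Fintype.card (Fin m)))
        ≤ (C * n) ^ ((m : ℝ) / ((n : ℝ) - (m : ℝ))) := by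
      simp only [Fintype.card_fin]
      rw [mul_comm C]
      apply Real.rpow_le_rpow (by positivity) _ hexp
      exact mul_le_mul_of_nonneg_left hAC (Nat.cast_nonneg n)
    have h3 := le_trans h1 (le_trans htle h2)
    linarith [Real.rpow_nonneg (by positivity : (0:ℝ) ≤ C * n) ((m : ℝ) / ((n : ℝ) - (m : ℝ)))]
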